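/- Under the assumptions of the tragedy-of-the-commons setup (v_i concave nondecreasing differentiable, p convex nondecreasing strictly increasing differentiable, interior equilibria), at the Nash equilibrium ξ every agent's marginal social welfare is negative: ∂/∂q_i [∑_j U_j(q)] evaluated at ξ equals −‖ξ_{−i}‖₁ p'(‖ξ‖₁) ≤ 0, with strict inequality when ‖ξ_{−i}‖₁ > 0 and p'(‖ξ‖₁) > 0. -/

import Mathlib

open Finset

/-- A differentiable function that is strictly monotone on `Ici 0` has nonnegative
derivative at a positive point. -/
lemma deriv_nonneg_of_strictMonoOn {p : ℝ → ℝ} (hpdiff : Differentiable ℝ p)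
    (hpmono : StrictMonoOn p (Set.Ici (0:ℝ))) {S : ℝ} (hS : 0 < S) :
    0 ≤ deriv p S := by
  have hd : HasDerivAt p (deriv p S) S := (hpdiff S).hasDerivAt
  rw [hasDerivAt_iff_tendsto_slope] at hd
  have hd' : Filter.Tendsto (slope p S) (nhdsWithin S (Set.Ioi S)) (nhds (deriv p S)) :=
    hd.mono_left (nhdsWithin_mono _ (fun x hx => ne_of_gt hx))
  refine ge_of_tendsto hd' ?_
  filter_upwards [self_mem_nhdsWithin] with x hx
  have hx' : S < x := hx
  have h1 : p S ≤ p x :=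
    le_of_lt (hpmono (le_of_lt hS) (le_of_lt (hS.trans hx')) hx')
  have : 0 ≤ p x - p S := by linarith
  rw [slope_def_field]
  exact div_nonneg this (by linarith)

theorem marginal_social_welfare_at_nash (N : ℕ) (hN : 1 ≤ N)
    (v : Fin N → ℝ → ℝ) (p : ℝ → ℝ)
    (hvdiff : ∀ i, Differentiable ℝ (v i))
    (hvconc : ∀ i, ConcaveOn ℝ (Set.Ici (0:ℝ)) (v i))
    (hvmono : ∀ i, MonotoneOn (v i) (Set.Ici (0:ℝ)))
    (hpdiff : Differentiable ℝ p)
    (hpconv : ConvexOn ℝ (Set.Ici (0:ℝ)) p)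
    (hpmono : StrictMonoOn p (Set.Ici (0:ℝ)))
    (ξ : Fin N → ℝ) (hξ : ∀ j, 0 < ξ j)
    (hFOC : ∀ i, deriv (v i) (ξ i) =
      p (∑ j, ξ j) + ξ i * deriv p (∑ j, ξ j))
    (i : Fin N) :
    deriv (fun x : ℝ => ∑ j, (v j (Function.update ξ i x j)
        - Function.update ξ i x j * p (∑ k, Function.update ξ i x k))) (ξ i)
      = -(∑ j ∈ Finset.univ.erase i, ξ j) * deriv p (∑ j, ξ j)
    ∧ -(∑ j ∈ Finset.univ.erase i, ξ j) * deriv p (∑ j, ξ j) ≤ 0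
    ∧ (0 < ∑ j ∈ Finset.univ.erase i, ξ j → 0 < deriv p (∑ j, ξ j) →
        -(∑ j ∈ Finset.univ.erase i, ξ j) * deriv p (∑ j, ξ j) < 0) := by
  set S' : ℝ := ∑ j ∈ Finset.univ.erase i, ξ j with hS'
  set S : ℝ := ∑ j, ξ j with hS
  have hsplit : S = ξ i + S' := by
    rw [hS, hS', ← Finset.add_sum_erase _ _ (Finset.mem_univ i)]
  have hupdsum : ∀ x : ℝ, (∑ k, Function.update ξ i x k) = x + S' := by
    intro x
    rw [Finset.sum_update_of_mem (Finset.mem_univ i), hS', Finset.sdiff_singleton_eq_erase]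
  have hvsum : ∀ x : ℝ, (∑ j, v j (Function.update ξ i x j))
      = v i x + ∑ j ∈ Finset.univ.erase i, v j (ξ j) := by
    intro x
    rw [← Finset.add_sum_erase _ _ (Finset.mem_univ i), Function.update_self]
    congr 1
    refine Finset.sum_congr rfl fun j hj => ?_
    rw [Function.update_of_ne (Finset.ne_of_mem_erase hj)]
  have hfun : (fun x : ℝ => ∑ j, (v j (Function.update ξ i x j)
        - Function.update ξ i x j * p (∑ k, Function.update ξ i x k)))
      = fun x : ℝ => (v i x + ∑ j ∈ Finset.univ.erase i, v j (ξ j))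
        - (x + S') * p (x + S') := by
    funext x
    rw [Finset.sum_sub_distrib, hvsum, ← Finset.sum_mul, hupdsum]
  have hS'nonneg : 0 ≤ S' := Finset.sum_nonneg fun j _ => (hξ j).le
  have hSpos : 0 < S := by
    rw [hsplit]; have := hξ i; linarith
  -- derivative computation
  have h1 : HasDerivAt (fun x : ℝ => x + S') 1 (ξ i) := (hasDerivAt_id _).add_const S'
  have hp1 : HasDerivAt (fun x : ℝ => p (x + S')) (deriv p S * 1) (ξ i) := by
    have := ((hpdiff (ξ i + S')).hasDerivAt).comp (ξ i) h1
    rwa [← hsplit] at this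
  have hprod : HasDerivAt (fun x : ℝ => (x + S') * p (x + S'))
      (1 * p S + (ξ i + S') * (deriv p S * 1)) (ξ i) := by
    have := h1.mul hp1
    simpa [← hsplit, Pi.mul_def] using this
  have hmain : HasDerivAt (fun x : ℝ => (v i x + ∑ j ∈ Finset.univ.erase i, v j (ξ j))
        - (x + S') * p (x + S'))
      ((deriv (v i) (ξ i)) - (1 * p S + (ξ i + S') * (deriv p S * 1))) (ξ i) :=
    (((hvdiff i (ξ i)).hasDerivAt).add_const _).sub hprod
  have hderiv : deriv (fun x : ℝ => ∑ j, (v j (Function.update ξ i x j)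
        - Function.update ξ i x j * p (∑ k, Function.update ξ i x k))) (ξ i)
      = -S' * deriv p S := by
    rw [hfun, hmain.deriv, hFOC i]
    rw [hsplit]; ring
  have hderivp : 0 ≤ deriv p S := deriv_nonneg_of_strictMonoOn hpdiff hpmono hSpos
  refine ⟨hderiv, ?_, ?_⟩
  · have : 0 ≤ S' * deriv p S := mul_nonneg hS'nonneg hderivp
    linarith
  · intro h1' h2'
    have : 0 < S' * deriv p S := mul_pos h1' h2'
    linarith
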